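/- arXiv:2210.03284 — 10 statements merged into one kernel-verified Lean document; each statement's English description precedes it below -/
import Mathlib

section
/- For every integer m ≥ 2 and every polynomial x ∈ R, one has Q_m(x) = w₂^(2^(m-1)) · Q_{m-1}(x) + w₃^(2^(m-1)) · Q_{m-2}(x). (Equivalently, Q_m x + w₂^(2^(m-1)) Q_{m-1} x + w₃^(2^(m-1)) Q_{m-2} x = 0 in characteristic 2.) -/
open MvPolynomial

/-- `R = ℤ/2[s₁, s₂]`, the mod 2 cohomology of `B(ℤ/2)²`. -/
noncomputable abbrev R : Type := MvPolynomial (Fin 2) (ZMod 2)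

/-- The `m`-th Milnor operation `Q_m`, the derivation with `Q_m(sᵢ) = sᵢ^(2^(m+1))`. -/
noncomputable def Q (m : ℕ) : Derivation (ZMod 2) R R :=
  MvPolynomial.mkDerivation (ZMod 2) (fun i : Fin 2 => (X i : R) ^ 2 ^ (m + 1))

/-- `w₂ = s₁² + s₁s₂ + s₂²`. -/
noncomputable def w₂ : R := X 0 ^ 2 + X 0 * X 1 + X 1 ^ 2

/-- `w₃ = s₁²s₂ + s₁s₂²`. -/
noncomputable def w₃ : R := X 0 ^ 2 * X 1 + X 0 * X 1 ^ 2

lemma key (i : Fin 2) : (X i : R) ^ 4 = w₂ * X i ^ 2 + w₃ * X i := by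
  have h2 : (2 : R) = 0 := CharTwo.two_eq_zero
  rw [w₂, w₃]
  match i with
  | 0 => linear_combination (-(X 0 ^ 3 * X 1) - X 0 ^ 2 * X 1 ^ 2) * h2
  | 1 => linear_combination (-(X 0 * X 1 ^ 3) - X 0 ^ 2 * X 1 ^ 2) * h2

theorem stmt_0 (m : ℕ) (hm : 2 ≤ m) (x : R) :
    Q m x = w₂ ^ 2 ^ (m - 1) * Q (m - 1) x + w₃ ^ 2 ^ (m - 1) * Q (m - 2) x := by
  obtain ⟨k, rfl⟩ : ∃ k, m = k + 2 := ⟨m - 2, by omega⟩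
  simp only [show k + 2 - 1 = k + 1 from rfl, show k + 2 - 2 = k from rfl]
  have hD : Q (k + 2) = w₂ ^ 2 ^ (k + 1) • Q (k + 1) + w₃ ^ 2 ^ (k + 1) • Q k := by
    apply MvPolynomial.derivation_ext
    intro i
    simp only [Q, mkDerivation_X, Derivation.add_apply, Derivation.smul_apply, smul_eq_mul]
    have h1 : (X i : R) ^ 2 ^ (k + 2 + 1) = ((X i : R) ^ 4) ^ 2 ^ (k + 1) := by
      rw [← pow_mul]; ring_nf
    rw [h1, key, add_pow_char_pow, mul_pow, mul_pow, ← pow_mul,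
      show 2 * 2 ^ (k + 1) = 2 ^ (k + 1 + 1) by rw [pow_succ]; ring]
  rw [hD]
  simp
end

section
/- For every integer m ≥ 2 there exists an element g in the subalgebra of R generated by w₂² and w₃² such that Q_m(Q_1(w₂)) = g · w₃⁴. -/
open MvPolynomial

lemma h2R : (2 : R) = 0 := CharTwo.two_eq_zero

lemma Qw₂ (m : ℕ) : Q m w₂ = X 0 ^ 2 ^ (m+1) * X 1 + X 0 * X 1 ^ 2 ^ (m+1) := by
  simp only [Q, w₂, map_add, Derivation.leibniz, Derivation.leibniz_pow, mkDerivation_X,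
    smul_eq_mul, smul_smul, two_smul, CharTwo.add_self_eq_zero]
  ring

lemma QQ (m : ℕ) : Q m (Q 1 w₂) =
    X 0 ^ 2 ^ (m+1) * X 1 ^ 4 + X 0 ^ 4 * X 1 ^ 2 ^ (m+1) := by
  rw [Qw₂, show (2:ℕ) ^ (1+1) = 4 from by norm_num]
  have h4 : ((4:ℕ) : R) = 0 := by
    push_cast
    linear_combination 2 * h2R
  simp only [Q, map_add, Derivation.leibniz, Derivation.leibniz_pow, mkDerivation_X,
    smul_eq_mul, smul_smul, nsmul_eq_mul, h4, zero_mul, mul_zero, add_zero, zero_add]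
  ring

/-- The sequence of Dickson-polynomial coefficients. -/
noncomputable def D : ℕ → R
  | 0 => 0
  | 1 => 1
  | (n+2) => D (n+1) * w₂ ^ 2 ^ (n+1) + D n * w₃ ^ 2 ^ (n+1)

lemma w2_pow (k : ℕ) :
    w₂ ^ 2 ^ k = (X 0 ^ 2 ^ k) ^ 2 + X 0 ^ 2 ^ k * X 1 ^ 2 ^ k + (X 1 ^ 2 ^ k) ^ 2 := by
  rw [w₂, add_pow_char_pow, add_pow_char_pow, mul_pow, pow_right_comm (X 0),
    pow_right_comm (X 1)]

lemma w3_pow (k : ℕ) :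
    w₃ ^ 2 ^ k = (X 0 ^ 2 ^ k) ^ 2 * X 1 ^ 2 ^ k + X 0 ^ 2 ^ k * (X 1 ^ 2 ^ k) ^ 2 := by
  rw [w₃, add_pow_char_pow, mul_pow, mul_pow, pow_right_comm (X 0), pow_right_comm (X 1)]

lemma core (j : ℕ) :
    X 0 ^ 2 ^ (j+5) * X 1 ^ 4 + X 0 ^ 4 * X 1 ^ 2 ^ (j+5)
      = (X 0 ^ 2 ^ (j+4) * X 1 ^ 4 + X 0 ^ 4 * X 1 ^ 2 ^ (j+4)) * w₂ ^ 2 ^ (j+3)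
        + (X 0 ^ 2 ^ (j+3) * X 1 ^ 4 + X 0 ^ 4 * X 1 ^ 2 ^ (j+3)) * w₃ ^ 2 ^ (j+3) := by
  have e4 : ∀ a : R, a ^ 2 ^ (j+4) = (a ^ 2 ^ (j+3)) ^ 2 := by
    intro a
    rw [← pow_mul, ← pow_succ]
  have e5 : ∀ a : R, a ^ 2 ^ (j+5) = (a ^ 2 ^ (j+3)) ^ 4 := by
    intro a
    rw [← pow_mul]
    congr 1
    rw [show j + 5 = (j+3) + 2 from by omega, pow_add]
    norm_num
  rw [w2_pow, w3_pow]
  rw [e4 ((X 0 : R)), e4 ((X 1 : R)), e5 ((X 0 : R)), e5 ((X 1 : R))]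
  set A := (X 0 : R) ^ 2 ^ (j+3) with hA
  set B := (X 1 : R) ^ 2 ^ (j+3) with hB
  linear_combination (-(A*B^3*(X 0:R)^4) - A^2*B^2*(X 1:R)^4 - A^2*B^2*(X 0:R)^4
    - A^3*B*(X 1:R)^4) * h2R

lemma key_s1 : ∀ j : ℕ,
    X 0 ^ 2 ^ (j+3) * X 1 ^ 4 + X 0 ^ 4 * X 1 ^ 2 ^ (j+3) = (D (j+1)) ^ 2 * w₃ ^ 4 := by
  have base0 : X 0 ^ 2 ^ (0+3) * X 1 ^ 4 + X 0 ^ 4 * X 1 ^ 2 ^ (0+3)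
      = (D 1) ^ 2 * w₃ ^ 4 := by
    rw [show D 1 = 1 from rfl, w₃]
    norm_num
    linear_combination (-(2*(X 0:R)^5*(X 1:R)^7) - 3*(X 0:R)^6*(X 1:R)^6
      - 2*(X 0:R)^7*(X 1:R)^5) * h2R
  have base1 : X 0 ^ 2 ^ (1+3) * X 1 ^ 4 + X 0 ^ 4 * X 1 ^ 2 ^ (1+3)
      = (D 2) ^ 2 * w₃ ^ 4 := by
    rw [show D 2 = D 1 * w₂ ^ 2 ^ 1 + D 0 * w₃ ^ 2 ^ 1 from rfl,
      show D 1 = 1 from rfl, show D 0 = 0 from rfl, w₂, w₃]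
    norm_num
    linear_combination (-(4*(X 0:R)^5*(X 1:R)^15) - 16*(X 0:R)^6*(X 1:R)^14
      - 42*(X 0:R)^7*(X 1:R)^13 - 80*(X 0:R)^8*(X 1:R)^12 - 116*(X 0:R)^9*(X 1:R)^11
      - 131*(X 0:R)^10*(X 1:R)^10 - 116*(X 0:R)^11*(X 1:R)^9 - 80*(X 0:R)^12*(X 1:R)^8
      - 42*(X 0:R)^13*(X 1:R)^7 - 16*(X 0:R)^14*(X 1:R)^6 - 4*(X 0:R)^15*(X 1:R)^5) * h2R
  have step : ∀ n : ℕ,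
      X 0 ^ 2 ^ (n+3) * X 1 ^ 4 + X 0 ^ 4 * X 1 ^ 2 ^ (n+3) = (D (n+1)) ^ 2 * w₃ ^ 4 →
      X 0 ^ 2 ^ (n+4) * X 1 ^ 4 + X 0 ^ 4 * X 1 ^ 2 ^ (n+4) = (D (n+2)) ^ 2 * w₃ ^ 4 →
      X 0 ^ 2 ^ (n+5) * X 1 ^ 4 + X 0 ^ 4 * X 1 ^ 2 ^ (n+5) = (D (n+3)) ^ 2 * w₃ ^ 4 := by
    intro n h1 hh2
    have hsq : (D (n+3)) ^ 2 = (D (n+2)) ^ 2 * w₂ ^ 2 ^ (n+3) + (D (n+1)) ^ 2 * w₃ ^ 2 ^ (n+3) := by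
      rw [show D (n+3) = D (n+2) * w₂ ^ 2 ^ (n+2) + D (n+1) * w₃ ^ 2 ^ (n+2) from rfl,
        add_pow_char, mul_pow, mul_pow, ← pow_mul, ← pow_mul, ← pow_succ]
    rw [core n, h1, hh2, hsq]
    ring
  have H : ∀ j : ℕ,
      (X 0 ^ 2 ^ (j+3) * X 1 ^ 4 + X 0 ^ 4 * X 1 ^ 2 ^ (j+3) = (D (j+1)) ^ 2 * w₃ ^ 4) ∧
      (X 0 ^ 2 ^ (j+4) * X 1 ^ 4 + X 0 ^ 4 * X 1 ^ 2 ^ (j+4) = (D (j+2)) ^ 2 * w₃ ^ 4) := by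
    intro j
    induction j with
    | zero => exact ⟨base0, base1⟩
    | succ n ih => exact ⟨ih.2, step n ih.1 ih.2⟩
  exact fun j => (H j).1

lemma D_mem : ∀ n, D n ∈ Algebra.adjoin (ZMod 2) ({w₂, w₃} : Set R)
  | 0 => by rw [show D 0 = 0 from rfl]; exact zero_mem _
  | 1 => by rw [show D 1 = 1 from rfl]; exact one_mem _
  | (n+2) => by
      rw [show D (n+2) = D (n+1) * w₂ ^ 2 ^ (n+1) + D n * w₃ ^ 2 ^ (n+1) from rfl]
      exact add_mem
        (mul_mem (D_mem (n+1)) (pow_mem (Algebra.subset_adjoin (by simp)) _))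
        (mul_mem (D_mem n) (pow_mem (Algebra.subset_adjoin (by simp)) _))

lemma sq_mem {a : R} (ha : a ∈ Algebra.adjoin (ZMod 2) ({w₂, w₃} : Set R)) :
    a ^ 2 ∈ Algebra.adjoin (ZMod 2) ({w₂ ^ 2, w₃ ^ 2} : Set R) := by
  induction ha using Algebra.adjoin_induction with
  | mem x hx =>
      rcases hx with rfl | rfl
      · exact Algebra.subset_adjoin (by simp)
      · exact Algebra.subset_adjoin (by simp)
  | algebraMap r =>
      rw [← map_pow]
      exact Subalgebra.algebraMap_mem _ _
  | add x y hx hy ihx ihy =>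
      rw [add_pow_char]
      exact add_mem ihx ihy
  | mul x y hx hy ihx ihy =>
      rw [mul_pow]
      exact mul_mem ihx ihy

theorem stmt_1 (m : ℕ) (hm : 2 ≤ m) :
    ∃ g ∈ Algebra.adjoin (ZMod 2) ({w₂ ^ 2, w₃ ^ 2} : Set R),
      Q m (Q 1 w₂) = g * w₃ ^ 4 := by
  obtain ⟨k, rfl⟩ : ∃ k, m = k + 2 := ⟨m - 2, by omega⟩
  refine ⟨(D (k+1)) ^ 2, sq_mem (D_mem (k+1)), ?_⟩
  rw [QQ]
  have h := key_s1 k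
  rw [show k + 2 + 1 = k + 3 from by omega]
  exact h
end

section
/- For every m ≥ 0, the subalgebra A of R generated by w₂ and w₃ is closed under Q_m; that is, Q_m(x) ∈ A for every x ∈ A. -/
open MvPolynomial

/-- `Q_m(w₂)` as an explicit polynomial. -/
noncomputable def fQ (m : ℕ) : R := X 0 ^ 2 ^ (m+1) * X 1 + X 0 * X 1 ^ 2 ^ (m+1)

lemma two_eq_zero : (2:R) = 0 := by
  have := CharP.cast_eq_zero R 2
  simpa using this

lemma frec (m : ℕ) : fQ (m+2) = w₂ ^ 2 ^ (m+1) * fQ (m+1) + w₃ ^ 2 ^ (m+1) * fQ m := by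
  unfold fQ w₂ w₃
  rw [add_pow_char_pow, add_pow_char_pow, add_pow_char_pow]
  have h3 : 2^(m+3) = 2^(m+1)*4 := by ring
  have h2 : (2:ℕ)^(m+2) = 2^(m+1)*2 := by ring
  rw [h3, h2, pow_mul (X 0 : R), pow_mul (X 1 : R), pow_mul (X 0 : R), pow_mul (X 1 : R)]
  rw [mul_pow, mul_pow, mul_pow, ← pow_mul (X 0 : R) 2, ← pow_mul (X 1 : R) 2,
    mul_comm 2 (2^(m+1)), pow_mul (X 0 : R), pow_mul (X 1 : R)]
  set u := (X 0 : R) ^ 2 ^ (m+1)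
  set v := (X 1 : R) ^ 2 ^ (m+1)
  linear_combination (-1:R) * (u^3*v*X 1 + u^2*v^2*X 1 + u^2*v^2*X 0 + u*v^3*X 0 : R) * two_eq_zero

lemma fmem (m : ℕ) : fQ m ∈ Algebra.adjoin (ZMod 2) ({w₂, w₃} : Set R) := by
  have hw2 : w₂ ∈ Algebra.adjoin (ZMod 2) ({w₂, w₃} : Set R) :=
    Algebra.subset_adjoin (by simp)
  have hw3 : w₃ ∈ Algebra.adjoin (ZMod 2) ({w₂, w₃} : Set R) :=
    Algebra.subset_adjoin (by simp)
  induction m using Nat.strong_induction_on with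
  | _ m ih =>
    match m with
    | 0 =>
      have : fQ 0 = w₃ := by unfold fQ w₃; norm_num
      rw [this]; exact hw3
    | 1 =>
      have : fQ 1 = w₂ * w₃ := by
        unfold fQ w₂ w₃
        linear_combination (-(X 0:R)^3*X 1^2 - X 0^2*X 1^3) * two_eq_zero
      rw [this]; exact mul_mem hw2 hw3
    | (m+2) =>
      rw [frec m]
      exact add_mem (mul_mem (pow_mem hw2 _) (ih (m+1) (by omega)))
        (mul_mem (pow_mem hw3 _) (ih m (by omega)))

lemma Qw2 (m : ℕ) : Q m w₂ = fQ m := by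
  unfold w₂ fQ
  simp [Q, Derivation.leibniz, Derivation.leibniz_pow, mkDerivation_X, smul_eq_mul]
  linear_combination (X 0 ^ 1 * X 0 ^ 2 ^ (m+1) + X 1 ^ 1 * X 1 ^ 2 ^ (m+1) : R) * two_eq_zero

lemma Qw3 (m : ℕ) : Q m w₃ = (X 0:R) ^ 2 * X 1 ^ 2 ^ (m+1) + X 0 ^ 2 ^ (m+1) * X 1 ^ 2 := by
  unfold w₃
  simp [Q, Derivation.leibniz, Derivation.leibniz_pow, mkDerivation_X, smul_eq_mul]
  linear_combination (X 0 ^ 1 * X 1 * X 0 ^ 2 ^ (m+1) + X 0 * X 1 ^ 1 * X 1 ^ 2 ^ (m+1) : R) * two_eq_zero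

lemma Qw3mem (m : ℕ) : Q m w₃ ∈ Algebra.adjoin (ZMod 2) ({w₂, w₃} : Set R) := by
  rw [Qw3]
  match m with
  | 0 =>
    have : (X 0:R) ^ 2 * X 1 ^ 2 ^ (0+1) + X 0 ^ 2 ^ (0+1) * X 1 ^ 2 = 0 := by
      norm_num
      linear_combination ((X 0:R)^2 * X 1^2) * two_eq_zero
    rw [this]; exact zero_mem _
  | (s+1) =>
    have : (X 0:R) ^ 2 * X 1 ^ 2 ^ (s+2) + X 0 ^ 2 ^ (s+2) * X 1 ^ 2 = (fQ s) ^ 2 := by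
      unfold fQ
      have h2 : (2:ℕ)^(s+2) = 2^(s+1)*2 := by ring
      rw [h2, pow_mul (X 0 : R), pow_mul (X 1 : R)]
      linear_combination (-(X 0:R)^2^(s+1) * X 0 * X 1^2^(s+1) * X 1) * two_eq_zero
    rw [this]; exact pow_mem (fmem s) 2

theorem stmt_4 (m : ℕ) (x : R) (hx : x ∈ Algebra.adjoin (ZMod 2) ({w₂, w₃} : Set R)) :
    Q m x ∈ Algebra.adjoin (ZMod 2) ({w₂, w₃} : Set R) := by
  induction hx using Algebra.adjoin_induction with
  | mem y hy =>
    simp only [Set.mem_insert_iff, Set.mem_singleton_iff] at hy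
    rcases hy with rfl | rfl
    · rw [Qw2]; exact fmem m
    · exact Qw3mem m
  | algebraMap r =>
    simp only [Derivation.map_algebraMap]
    exact zero_mem _
  | add a b ha hb iha ihb => rw [map_add]; exact add_mem iha ihb
  | mul a b ha hb iha ihb =>
    rw [Derivation.leibniz, smul_eq_mul, smul_eq_mul]
    exact add_mem (mul_mem ha ihb) (mul_mem hb iha)
end

section
/- In R the following identities hold: Q₂(Q₁(w₂)) = w₃⁴, Q₃(Q₁(w₂)) = w₂⁴·w₃⁴, and Q₄(Q₁(w₂)) = (w₂¹² + w₃⁸)·w₃⁴. -/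
open MvPolynomial

theorem stmt_5 :
    Q 2 (Q 1 w₂) = w₃ ^ 4 ∧ Q 3 (Q 1 w₂) = w₂ ^ 4 * w₃ ^ 4 ∧
      Q 4 (Q 1 w₂) = (w₂ ^ 12 + w₃ ^ 8) * w₃ ^ 4 := by
  have h2 : (2 : R) = 0 := CharTwo.two_eq_zero
  have h4 : (4 : R) = 0 := by rw [show (4:R) = 2*2 by norm_num, h2, mul_zero]
  have h6 : (6 : R) = 0 := by rw [show (6:R) = 2*3 by norm_num, h2, zero_mul]
  have sq : ∀ a b : R, (a + b) ^ 2 = a ^ 2 + b ^ 2 := fun a b => CharTwo.add_sq a b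
  have h1 : Q 1 w₂ = X 0 ^ 4 * X 1 + X 0 * X 1 ^ 4 := by
    simp only [Q, w₂, map_add, Derivation.leibniz, Derivation.leibniz_pow, mkDerivation_X,
      nsmul_eq_mul, smul_eq_mul, Nat.cast_ofNat, h2]
    ring
  have hq : ∀ m : ℕ, Q m (X 0 ^ 4 * X 1 + X 0 * X 1 ^ 4) =
      (X 0 : R) ^ 4 * X 1 ^ 2 ^ (m + 1) + X 0 ^ 2 ^ (m + 1) * X 1 ^ 4 := by
    intro m
    simp only [Q, map_add, Derivation.leibniz, Derivation.leibniz_pow, mkDerivation_X,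
      nsmul_eq_mul, smul_eq_mul, Nat.cast_ofNat, h4]
    ring
  have hw3_4 : w₃ ^ 4 = X 0 ^ 8 * X 1 ^ 4 + X 0 ^ 4 * X 1 ^ 8 := by
    rw [show w₃ ^ 4 = (w₃ ^ 2) ^ 2 by ring, w₃, sq, sq]
    ring_nf
  have hw2_4 : w₂ ^ 4 = X 0 ^ 8 + X 0 ^ 4 * X 1 ^ 4 + X 1 ^ 8 := by
    rw [show w₂ ^ 4 = (w₂ ^ 2) ^ 2 by ring, w₂, sq, sq, sq]
    ring_nf
    rw [h2]
    ring
  have hw3_8 : w₃ ^ 8 = X 0 ^ 16 * X 1 ^ 8 + X 0 ^ 8 * X 1 ^ 16 := by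
    rw [show w₃ ^ 8 = (w₃ ^ 4) ^ 2 by ring, hw3_4, sq]
    ring
  have hw2_8 : w₂ ^ 8 = X 0 ^ 16 + X 0 ^ 8 * X 1 ^ 8 + X 1 ^ 16 := by
    rw [show w₂ ^ 8 = (w₂ ^ 4) ^ 2 by ring, hw2_4, sq, sq]
    ring
  refine ⟨?_, ?_, ?_⟩
  · rw [h1, hq, hw3_4]; norm_num; ring
  · rw [h1, hq, hw2_4, hw3_4]
    norm_num
    ring_nf
    simp only [h2, mul_zero, zero_mul, add_zero, zero_add]
  · rw [h1, hq, show (w₂ ^ 12 + w₃ ^ 8) * w₃ ^ 4 = (w₂ ^ 8 * w₂ ^ 4 + w₃ ^ 8) * w₃ ^ 4 by ring,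
      hw2_8, hw2_4, hw3_8, hw3_4]
    norm_num
    ring_nf
    simp only [h2, h4, h6, mul_zero, zero_mul, add_zero, zero_add]
end

section
/- Let T = MvPolynomial (Fin 3) (ZMod 2) be the polynomial ring ℤ/2[a', c', t], and let φ : S → T be the (ZMod 2)-algebra homomorphism determined by φ(a) = a', φ(b) = t·a', φ(c) = c', φ(d) = t·c'. Then the kernel of φ equals the ideal of S generated by a·d + c·b. (In particular φ induces an injective ring homomorphism from S⧸(a·d + c·b) into T.) -/
open MvPolynomial

/-- `S = ℤ/2[a,b,c,d] ≅ H^*(BSO(3)²; ℤ/2)` with `a = w₂'`, `b = w₃'`, `c = w₂''`, `d = w₃''`. -/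
noncomputable abbrev S : Type := MvPolynomial (Fin 4) (ZMod 2)

noncomputable def a : S := X 0
noncomputable def b : S := X 1
noncomputable def c : S := X 2
noncomputable def d : S := X 3

/-- `T = ℤ/2[a', c', t]`. -/
noncomputable abbrev T : Type := MvPolynomial (Fin 3) (ZMod 2)

/-- The algebra map `φ : S → T` with `φ(a) = a'`, `φ(b) = t·a'`, `φ(c) = c'`, `φ(d) = t·c'`. -/
noncomputable def φ : S →ₐ[ZMod 2] T :=
  MvPolynomial.aeval ![X 0, X 2 * X 0, X 1, X 2 * X 1]

/-! ### Auxiliary lemmas -/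

lemma two_eq_zero_poly {σ : Type*} : (2 : MvPolynomial σ (ZMod 2)) = 0 := by
  have h : (2 : MvPolynomial σ (ZMod 2)) = C (2 : ZMod 2) := by rw [map_ofNat]
  rw [h, show (2 : ZMod 2) = 0 from rfl, map_zero]

lemma prod_monomial {σ τ : Type*} [DecidableEq σ] (s : Finset σ) (w : σ → (τ →₀ ℕ)) :
    (∏ i ∈ s, monomial (w i) (1 : ZMod 2)) = monomial (∑ i ∈ s, w i) 1 := by
  induction s using Finset.induction with
  | empty => simp [monomial_zero']
  | insert _ _ h ih => rw [Finset.prod_insert h, Finset.sum_insert h, ih, monomial_mul, mul_one]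

/-- View a finsupp as an `MvPolynomial` (they are definitionally equal). -/
noncomputable def toMv (q : (Fin 3 →₀ ℕ) →₀ ZMod 2) : T := AddMonoidAlgebra.ofCoeff q

noncomputable def fs (p : MvPolynomial (Fin 3) (ZMod 2)) : (Fin 3 →₀ ℕ) →₀ ZMod 2 :=
  AddMonoidAlgebra.coeff p

lemma fs_add (p q : MvPolynomial (Fin 3) (ZMod 2)) : fs (p + q) = fs p + fs q := rfl

lemma coeff_toMv (q : (Fin 3 →₀ ℕ) →₀ ZMod 2) (m : Fin 3 →₀ ℕ) :
    coeff m (toMv q) = q m := rfl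

lemma toMv_add (q r : (Fin 3 →₀ ℕ) →₀ ZMod 2) : toMv (q + r) = toMv q + toMv r := rfl

lemma aeval_monomial_map (v : Fin 3 → (Fin 3 →₀ ℕ)) (p : MvPolynomial (Fin 3) (ZMod 2)) :
    aeval (fun i => monomial (v i) (1 : ZMod 2)) p
      = toMv (Finsupp.mapDomain (fun m : Fin 3 →₀ ℕ => ∑ i, m i • v i) (fs p)) := by
  induction p using MvPolynomial.induction_on' with
  | monomial m r =>
    rw [aeval_monomial]
    rw [show fs (monomial m r : MvPolynomial (Fin 3) (ZMod 2)) = Finsupp.single m r from rfl]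
    rw [Finsupp.mapDomain_single]
    rw [show toMv (Finsupp.single (∑ i, m i • v i) r) = monomial (∑ i, m i • v i) r from
      single_eq_monomial _ _]
    have h1 : (m.prod fun i k => (monomial (v i) (1 : ZMod 2)) ^ k)
        = ∏ i, (monomial (v i) (1 : ZMod 2)) ^ (m i) := by
      rw [Finsupp.prod]
      refine Finset.prod_subset (Finset.subset_univ _) ?_
      intro i _ hi
      rw [Finsupp.notMem_support_iff.mp hi, pow_zero]
    rw [h1]
    have h2 : ∀ i : Fin 3, (monomial (v i) (1 : ZMod 2)) ^ (m i) = monomial (m i • v i) 1 := by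
      intro i; rw [monomial_pow, one_pow]
    simp_rw [h2]
    rw [prod_monomial, algebraMap_eq, C_mul_monomial, mul_one]
  | add p q hp hq => rw [map_add, hp, hq, fs_add, Finsupp.mapDomain_add, toMv_add]

lemma monomial_mul_mapDomain (u : Fin 3 →₀ ℕ) (h : (Fin 3 →₀ ℕ) → (Fin 3 →₀ ℕ))
    (g : MvPolynomial (Fin 3) (ZMod 2)) :
    (monomial u (1 : ZMod 2) : T) * toMv (Finsupp.mapDomain h (fs g))
      = toMv (Finsupp.mapDomain (fun m => u + h m) (fs g)) := by
  induction g using MvPolynomial.induction_on' with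
  | monomial m r =>
    rw [show fs (monomial m r : MvPolynomial (Fin 3) (ZMod 2)) = Finsupp.single m r from rfl]
    rw [Finsupp.mapDomain_single, Finsupp.mapDomain_single]
    rw [show toMv (Finsupp.single (h m) r) = monomial (h m) r from single_eq_monomial _ _]
    rw [show toMv (Finsupp.single (u + h m) r) = monomial (u + h m) r from single_eq_monomial _ _]
    rw [monomial_mul, one_mul]
  | add p q hp hq =>
    rw [fs_add, Finsupp.mapDomain_add, Finsupp.mapDomain_add, toMv_add, toMv_add, mul_add, hp, hq]

/-- The generic injectivity lemma. -/
lemma eq_zero_of_mapDomain_add {Hf Hg : (Fin 3 →₀ ℕ) → (Fin 3 →₀ ℕ)}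
    (hf : Function.Injective Hf) (hd : ∀ m m', Hf m ≠ Hg m')
    {f g : MvPolynomial (Fin 3) (ZMod 2)}
    (h : toMv (Finsupp.mapDomain Hf (fs f)) + toMv (Finsupp.mapDomain Hg (fs g)) = 0) : f = 0 := by
  ext m
  have h1 := congrArg (coeff (Hf m)) h
  rw [coeff_add, coeff_zero, coeff_toMv, coeff_toMv] at h1
  rw [Finsupp.mapDomain_apply hf] at h1
  rw [Finsupp.mapDomain_notin_range] at h1
  · rw [add_zero] at h1
    rw [coeff_zero]
    exact h1
  · rintro ⟨m', hm'⟩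
    exact hd m m' hm'.symm

/-! ### The normal form -/

lemma normal_form_pow (i j k l : ℕ) : ∃ f g : MvPolynomial (Fin 3) (ZMod 2),
    a ^ i * b ^ j * c ^ k * d ^ l
      - ((aeval ![b, c, d]) f + a * (aeval ![a, b, c]) g)
      ∈ Ideal.span ({a * d + c * b} : Set S) := by
  induction i generalizing j k l with
  | zero =>
    refine ⟨X 0 ^ j * X 1 ^ k * X 2 ^ l, 0, ?_⟩
    have h1 : ((aeval ![b, c, d]) ((X 0 : MvPolynomial (Fin 3) (ZMod 2)) ^ j * X 1 ^ k * X 2 ^ l) : S)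
        = b ^ j * c ^ k * d ^ l := by
      simp [map_pow]
    rw [h1, map_zero]
    have : a ^ 0 * b ^ j * c ^ k * d ^ l - (b ^ j * c ^ k * d ^ l + a * 0) = 0 := by ring
    rw [this]; exact Ideal.zero_mem _
  | succ i ih =>
    cases l with
    | zero =>
      refine ⟨0, X 0 ^ i * X 1 ^ j * X 2 ^ k, ?_⟩
      have h1 : ((aeval ![a, b, c]) ((X 0 : MvPolynomial (Fin 3) (ZMod 2)) ^ i * X 1 ^ j * X 2 ^ k) : S)
          = a ^ i * b ^ j * c ^ k := by
        simp [map_pow]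
      rw [h1, map_zero]
      have : a ^ (i + 1) * b ^ j * c ^ k * d ^ 0 - (0 + a * (a ^ i * b ^ j * c ^ k)) = 0 := by ring
      rw [this]; exact Ideal.zero_mem _
    | succ l =>
      obtain ⟨f, g, hfg⟩ := ih (j + 1) (k + 1) l
      refine ⟨f, g, ?_⟩
      have h2 : (2 : S) = 0 := two_eq_zero_poly
      have key : a ^ (i + 1) * b ^ j * c ^ k * d ^ (l + 1)
          - ((aeval ![b, c, d]) f + a * (aeval ![a, b, c]) g)
          = (a ^ i * b ^ (j + 1) * c ^ (k + 1) * d ^ l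
              - ((aeval ![b, c, d]) f + a * (aeval ![a, b, c]) g))
            + (a ^ i * b ^ j * c ^ k * d ^ l) * (a * d + c * b) := by
        linear_combination (-(a ^ i * b ^ (j + 1) * c ^ (k + 1) * d ^ l)) * h2
      rw [key]
      exact Ideal.add_mem _ hfg
        (Ideal.mul_mem_left _ _ (Ideal.subset_span (Set.mem_singleton _)))

lemma normal_form (p : S) : ∃ f g : MvPolynomial (Fin 3) (ZMod 2),
    p - ((aeval ![b, c, d]) f + a * (aeval ![a, b, c]) g)
      ∈ Ideal.span ({a * d + c * b} : Set S) := by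
  induction p using MvPolynomial.induction_on' with
  | monomial m r =>
    obtain ⟨f, g, h⟩ := normal_form_pow (m 0) (m 1) (m 2) (m 3)
    refine ⟨C r * f, C r * g, ?_⟩
    have hm : (monomial m r : S) = C r * (a ^ m 0 * b ^ m 1 * c ^ m 2 * d ^ m 3) := by
      rw [monomial_eq]
      congr 1
      rw [Finsupp.prod]
      rw [show (a ^ m 0 * b ^ m 1 * c ^ m 2 * d ^ m 3 : S) = ∏ i : Fin 4, X i ^ m i by
        rw [Fin.prod_univ_four]; rfl]
      refine Finset.prod_subset (Finset.subset_univ _) ?_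
      intro i _ hi
      rw [Finsupp.notMem_support_iff.mp hi, pow_zero]
    have key : monomial m r - ((aeval ![b, c, d]) (C r * f) + a * (aeval ![a, b, c]) (C r * g))
        = C r * (a ^ m 0 * b ^ m 1 * c ^ m 2 * d ^ m 3
            - ((aeval ![b, c, d]) f + a * (aeval ![a, b, c]) g)) := by
      rw [hm, map_mul, map_mul, aeval_C, aeval_C, algebraMap_eq]
      ring
    rw [key]
    exact Ideal.mul_mem_left _ _ h
  | add p q hp hq =>
    obtain ⟨f1, g1, h1⟩ := hp
    obtain ⟨f2, g2, h2⟩ := hq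
    refine ⟨f1 + f2, g1 + g2, ?_⟩
    have key : p + q - ((aeval ![b, c, d]) (f1 + f2) + a * (aeval ![a, b, c]) (g1 + g2))
        = (p - ((aeval ![b, c, d]) f1 + a * (aeval ![a, b, c]) g1))
          + (q - ((aeval ![b, c, d]) f2 + a * (aeval ![a, b, c]) g2)) := by
      rw [map_add, map_add]; ring
    rw [key]
    exact Ideal.add_mem _ h1 h2

/-! ### The exponent maps -/

noncomputable def vf : Fin 3 → (Fin 3 →₀ ℕ) :=
  ![Finsupp.single 0 1 + Finsupp.single 2 1, Finsupp.single 1 1,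
    Finsupp.single 1 1 + Finsupp.single 2 1]

noncomputable def vg : Fin 3 → (Fin 3 →₀ ℕ) :=
  ![Finsupp.single 0 1, Finsupp.single 0 1 + Finsupp.single 2 1, Finsupp.single 1 1]

noncomputable def Lf (m : Fin 3 →₀ ℕ) : Fin 3 →₀ ℕ := ∑ i, m i • vf i
noncomputable def Lg (m : Fin 3 →₀ ℕ) : Fin 3 →₀ ℕ :=
  Finsupp.single 0 1 + ∑ i, m i • vg i

lemma Lf_apply0 (m : Fin 3 →₀ ℕ) : Lf m 0 = m 0 := by
  rw [Lf, Finsupp.finset_sum_apply, Fin.sum_univ_three]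
  simp [vf, Finsupp.single_apply]

lemma Lf_apply1 (m : Fin 3 →₀ ℕ) : Lf m 1 = m 1 + m 2 := by
  rw [Lf, Finsupp.finset_sum_apply, Fin.sum_univ_three]
  simp [vf, Finsupp.single_apply]

lemma Lf_apply2 (m : Fin 3 →₀ ℕ) : Lf m 2 = m 0 + m 2 := by
  rw [Lf, Finsupp.finset_sum_apply, Fin.sum_univ_three]
  simp [vf, Finsupp.single_apply]

lemma Lg_apply0 (m : Fin 3 →₀ ℕ) : Lg m 0 = m 0 + m 1 + 1 := by
  rw [Lg, Finsupp.add_apply, Finsupp.finset_sum_apply, Fin.sum_univ_three]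
  simp [vg, Finsupp.single_apply]
  ring

lemma Lg_apply1 (m : Fin 3 →₀ ℕ) : Lg m 1 = m 2 := by
  rw [Lg, Finsupp.add_apply, Finsupp.finset_sum_apply, Fin.sum_univ_three]
  simp [vg, Finsupp.single_apply]

lemma Lg_apply2 (m : Fin 3 →₀ ℕ) : Lg m 2 = m 1 := by
  rw [Lg, Finsupp.add_apply, Finsupp.finset_sum_apply, Fin.sum_univ_three]
  simp [vg, Finsupp.single_apply]

lemma Lf_injective : Function.Injective Lf := by
  intro m m' h
  have e0 : Lf m 0 = Lf m' 0 := by rw [h]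
  have e1 : Lf m 1 = Lf m' 1 := by rw [h]
  have e2 : Lf m 2 = Lf m' 2 := by rw [h]
  rw [Lf_apply0, Lf_apply0] at e0
  rw [Lf_apply1, Lf_apply1] at e1
  rw [Lf_apply2, Lf_apply2] at e2
  have hm0 : m 0 = m' 0 := by omega
  have hm1 : m 1 = m' 1 := by omega
  have hm2 : m 2 = m' 2 := by omega
  ext j
  fin_cases j
  · exact hm0
  · exact hm1
  · exact hm2

lemma Lg_injective : Function.Injective Lg := by
  intro m m' h
  have e0 : Lg m 0 = Lg m' 0 := by rw [h]
  have e1 : Lg m 1 = Lg m' 1 := by rw [h]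
  have e2 : Lg m 2 = Lg m' 2 := by rw [h]
  rw [Lg_apply0, Lg_apply0] at e0
  rw [Lg_apply1, Lg_apply1] at e1
  rw [Lg_apply2, Lg_apply2] at e2
  have hm0 : m 0 = m' 0 := by omega
  have hm1 : m 1 = m' 1 := by omega
  have hm2 : m 2 = m' 2 := by omega
  ext j
  fin_cases j
  · exact hm0
  · exact hm1
  · exact hm2

lemma Lf_ne_Lg (m m' : Fin 3 →₀ ℕ) : Lf m ≠ Lg m' := by
  intro h
  have e0 : Lf m 0 = Lg m' 0 := by rw [h]
  have e2 : Lf m 2 = Lg m' 2 := by rw [h]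
  rw [Lf_apply0, Lg_apply0] at e0
  rw [Lf_apply2, Lg_apply2] at e2
  omega

/-! ### Identifying `φ` on the two pieces -/

lemma phi_F (f : MvPolynomial (Fin 3) (ZMod 2)) :
    φ ((aeval ![b, c, d]) f) = toMv (Finsupp.mapDomain Lf (fs f)) := by
  have h1 : φ ((aeval ![b, c, d]) f) = aeval (fun i => φ (![b, c, d] i)) f := by
    rw [← comp_aeval, AlgHom.comp_apply]
  rw [h1]
  have h2 : (fun i => φ (![b, c, d] i)) = fun i => monomial (vf i) (1 : ZMod 2) := by
    funext i
    fin_cases i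
    · show φ b = monomial (vf 0) (1 : ZMod 2)
      have hb : φ b = X 2 * X 0 := by simp [φ, b]
      rw [hb, show (X 2 : T) = monomial (Finsupp.single 2 1) 1 from rfl,
        show (X 0 : T) = monomial (Finsupp.single 0 1) 1 from rfl, monomial_mul, mul_one]
      rw [show vf 0 = Finsupp.single 0 1 + Finsupp.single 2 1 from rfl, add_comm]
    · show φ c = monomial (vf 1) (1 : ZMod 2)
      have hc : φ c = X 1 := by simp [φ, c]
      rw [hc, show vf 1 = Finsupp.single 1 1 from rfl]
      rfl
    · show φ d = monomial (vf 2) (1 : ZMod 2)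
      have hd : φ d = X 2 * X 1 := by simp [φ, d]
      rw [hd, show (X 2 : T) = monomial (Finsupp.single 2 1) 1 from rfl,
        show (X 1 : T) = monomial (Finsupp.single 1 1) 1 from rfl, monomial_mul, mul_one]
      rw [show vf 2 = Finsupp.single 1 1 + Finsupp.single 2 1 from rfl, add_comm]
  rw [h2, aeval_monomial_map]
  rfl

lemma phi_aG (g : MvPolynomial (Fin 3) (ZMod 2)) :
    φ (a * (aeval ![a, b, c]) g) = toMv (Finsupp.mapDomain Lg (fs g)) := by
  have h1 : φ ((aeval ![a, b, c]) g) = aeval (fun i => φ (![a, b, c] i)) g := by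
    rw [← comp_aeval, AlgHom.comp_apply]
  have h2 : (fun i => φ (![a, b, c] i)) = fun i => monomial (vg i) (1 : ZMod 2) := by
    funext i
    fin_cases i
    · show φ a = monomial (vg 0) (1 : ZMod 2)
      have ha : φ a = X 0 := by simp [φ, a]
      rw [ha, show vg 0 = Finsupp.single 0 1 from rfl]
      rfl
    · show φ b = monomial (vg 1) (1 : ZMod 2)
      have hb : φ b = X 2 * X 0 := by simp [φ, b]
      rw [hb, show (X 2 : T) = monomial (Finsupp.single 2 1) 1 from rfl,
        show (X 0 : T) = monomial (Finsupp.single 0 1) 1 from rfl, monomial_mul, mul_one]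
      rw [show vg 1 = Finsupp.single 0 1 + Finsupp.single 2 1 from rfl, add_comm]
    · show φ c = monomial (vg 2) (1 : ZMod 2)
      have hc : φ c = X 1 := by simp [φ, c]
      rw [hc, show vg 2 = Finsupp.single 1 1 from rfl]
      rfl
  have h3 : φ a = monomial (Finsupp.single 0 1) (1 : ZMod 2) := by
    have ha : φ a = X 0 := by simp [φ, a]
    rw [ha]; rfl
  rw [map_mul, h1, h2, aeval_monomial_map, h3, monomial_mul_mapDomain]
  rfl

/-! ### Main theorem -/

lemma span_le_ker : Ideal.span ({a * d + c * b} : Set S) ≤ RingHom.ker (φ : S →+* T) := by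
  rw [Ideal.span_le]
  rintro x hx
  rw [Set.mem_singleton_iff] at hx
  subst hx
  rw [SetLike.mem_coe, RingHom.mem_ker]
  have h2 : (2 : T) = 0 := two_eq_zero_poly
  show φ (a * d + c * b) = 0
  rw [map_add, map_mul, map_mul]
  have ha : φ a = X 0 := by simp [φ, a]
  have hb : φ b = X 2 * X 0 := by simp [φ, b]
  have hc : φ c = X 1 := by simp [φ, c]
  have hd : φ d = X 2 * X 1 := by simp [φ, d]
  rw [ha, hb, hc, hd]
  linear_combination (X 0 * X 1 * X 2 : T) * h2

theorem stmt_6 : RingHom.ker (φ : S →+* T) = Ideal.span {a * d + c * b} := by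
  refine le_antisymm ?_ span_le_ker
  intro p hp
  rw [RingHom.mem_ker] at hp
  have hp' : φ p = 0 := hp
  obtain ⟨f, g, hw⟩ := normal_form p
  have hφw : φ (p - ((aeval ![b, c, d]) f + a * (aeval ![a, b, c]) g)) = 0 :=
    span_le_ker hw
  have hE : toMv (Finsupp.mapDomain Lf (fs f)) + toMv (Finsupp.mapDomain Lg (fs g)) = 0 := by
    rw [← phi_F, ← phi_aG, ← map_add]
    rw [map_sub, hp', zero_sub, neg_eq_zero] at hφw
    exact hφw
  have hf0 : f = 0 := eq_zero_of_mapDomain_add Lf_injective Lf_ne_Lg hE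
  have hg0 : g = 0 := by
    rw [add_comm] at hE
    exact eq_zero_of_mapDomain_add Lg_injective (fun m m' hmm => Lf_ne_Lg m' m hmm.symm) hE
  rw [hf0, hg0, map_zero, map_zero, mul_zero, add_zero, sub_zero] at hw
  exact hw
end

section
/- The pair (a·d + c·b, b·d² + b²·d) is a regular sequence in S: a·d + c·b is a nonzerodivisor in S, and multiplication by b·d² + b²·d is injective on the quotient S ⧸ (a·d + c·b), and the quotient by both elements is nonzero. -/
open MvPolynomial

lemma primeX (i : Fin 4) : Prime (X i : S) := by
  have h0 : Prime (X 0 : S) := by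
    rw [← MulEquiv.prime_iff (finSuccEquiv (ZMod 2) 3).toMulEquiv]
    simpa [finSuccEquiv_X_zero] using (Polynomial.prime_X :
      Prime (Polynomial.X : Polynomial (MvPolynomial (Fin 3) (ZMod 2))))
  have := (MulEquiv.prime_iff (renameEquiv (ZMod 2) (Equiv.swap (0 : Fin 4) i)).toMulEquiv).mpr h0
  simpa using this

/-- The substitution `X 3 ↦ X 1 + X 3` (an involution in char 2). -/
noncomputable def τ : S ≃ₐ[ZMod 2] S := by
  refine AlgEquiv.ofAlgHom
    (aeval fun i => if i = 3 then X 1 + X 3 else X i)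
    (aeval fun i => if i = 3 then X 1 + X 3 else X i) ?_ ?_ <;>
  · apply MvPolynomial.algHom_ext
    intro i
    fin_cases i <;> simp <;> ring_nf <;>
      simp [CharTwo.two_eq_zero]

lemma primeBD : Prime ((X 1 + X 3 : S)) := by
  have h3 := primeX 3
  have := (MulEquiv.prime_iff τ.toMulEquiv).mpr h3
  simpa [τ, AlgEquiv.ofAlgHom] using this

lemma f_ne_zero : (a * d + c * b : S) ≠ 0 := by
  intro h
  have := congrArg (aeval fun i : Fin 4 => if i = 2 then (0 : S) else X i) h
  simp [a, b, c, d] at this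

lemma not_b_dvd : ¬ (X 1 : S) ∣ (a * d + c * b) := by
  intro ⟨t, ht⟩
  have := congrArg (aeval fun i : Fin 4 => if i = 1 then (0 : S) else X i) ht
  simp [a, b, c, d] at this

lemma not_d_dvd : ¬ (X 3 : S) ∣ (a * d + c * b) := by
  intro ⟨t, ht⟩
  have := congrArg (aeval fun i : Fin 4 => if i = 3 then (0 : S) else X i) ht
  simp [a, b, c, d] at this

lemma not_bd_dvd : ¬ (X 1 + X 3 : S) ∣ (a * d + c * b) := by
  intro ⟨t, ht⟩
  have h1 := congrArg (aeval fun i : Fin 4 => if i = 3 then (X 1 : S) else X i) ht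
  simp [a, b, c, d, CharTwo.add_self_eq_zero] at h1
  have h2 := congrArg (aeval fun i : Fin 4 => if i = 2 then (0 : S) else X i) h1
  simp at h2

lemma relprime : IsRelPrime (a * d + c * b : S) (b * d ^ 2 + b ^ 2 * d) := by
  intro e he hg
  by_contra hu
  have he0 : e ≠ 0 := by rintro rfl; exact f_ne_zero (zero_dvd_iff.mp he)
  obtain ⟨p, hpirr, hpe⟩ := WfDvdMonoid.exists_irreducible_factor hu he0
  have hpprime : Prime p := (UniqueFactorizationMonoid.irreducible_iff_prime).mp hpirr
  have hfact : (b * d ^ 2 + b ^ 2 * d : S) = X 1 * (X 3 * (X 1 + X 3)) := by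
    simp only [b, d]; ring
  have hpg : p ∣ X 1 * (X 3 * (X 1 + X 3)) := hfact ▸ hpe.trans hg
  have hpf : p ∣ (a * d + c * b) := hpe.trans he
  rcases hpprime.2.2 _ _ hpg with h | h
  · exact not_b_dvd ((hpirr.dvd_symm (primeX 1).irreducible h).trans hpf)
  · rcases hpprime.2.2 _ _ h with h' | h'
    · exact not_d_dvd ((hpirr.dvd_symm (primeX 3).irreducible h').trans hpf)
    · exact not_bd_dvd ((hpirr.dvd_symm primeBD.irreducible h').trans hpf)

theorem stmt_8 :
    (a * d + c * b) ∈ nonZeroDivisors S ∧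
    (∀ y : S ⧸ Ideal.span ({a * d + c * b} : Set S),
      Ideal.Quotient.mk (Ideal.span ({a * d + c * b} : Set S)) (b * d ^ 2 + b ^ 2 * d) * y = 0 →
        y = 0) ∧
    Ideal.span ({a * d + c * b, b * d ^ 2 + b ^ 2 * d} : Set S) ≠ ⊤ := by
  refine ⟨mem_nonZeroDivisors_of_ne_zero f_ne_zero, ?_, ?_⟩
  · intro y hy
    obtain ⟨x, rfl⟩ := Ideal.Quotient.mk_surjective y
    rw [← map_mul, Ideal.Quotient.eq_zero_iff_mem, Ideal.mem_span_singleton] at hy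
    rw [Ideal.Quotient.eq_zero_iff_mem, Ideal.mem_span_singleton]
    exact relprime.dvd_of_dvd_mul_left hy
  · intro h
    have h1 : (1 : S) ∈ Ideal.span ({a * d + c * b, b * d ^ 2 + b ^ 2 * d} : Set S) := by
      rw [h]; trivial
    have hle : Ideal.span ({a * d + c * b, b * d ^ 2 + b ^ 2 * d} : Set S) ≤
        RingHom.ker (constantCoeff (R := ZMod 2) (σ := Fin 4)) := by
      rw [Ideal.span_le]
      rintro x (rfl | rfl) <;> simp [RingHom.mem_ker, a, b, c, d]
    have := hle h1
    simp [RingHom.mem_ker] at this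
end

section
/- For all integers k ≥ 3, all i with 1 ≤ i ≤ k−1, and all m, n ≥ 0, one has π(a^m · c^n · b^i · d^(k−i)) = π(c^(m+n) · b · d^(k−1)) in N. -/
open MvPolynomial

/-- The ideal `J = (a·d + c·b, b·d² + b²·d)` of relations. -/
noncomputable def J : Ideal S := Ideal.span {a * d + c * b, b * d ^ 2 + b ^ 2 * d}

/-- `N = S ⧸ J`, the bottom line of the `E_∞`-term. -/
noncomputable abbrev N : Type := S ⧸ J

/-- The quotient map `π : S → N`. -/
noncomputable def π : S →+* N := Ideal.Quotient.mk J

lemma pi_eq {x y : S} (h : x + y ∈ J) : π x = π y := by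
  have : CharP S 2 := inferInstance
  rw [π, Ideal.Quotient.eq, CharTwo.sub_eq_add]
  exact h

lemma had : π (a * d) = π (c * b) :=
  pi_eq (Ideal.subset_span (Set.mem_insert _ _))
lemma hbd : π (b * d ^ 2) = π (b ^ 2 * d) :=
  pi_eq (Ideal.subset_span (Set.mem_insert_of_mem _ rfl))

lemma step (s t : ℕ) : π (b ^ (s + 2) * d ^ (t + 1)) = π (b ^ (s + 1) * d ^ (t + 2)) := by
  calc π (b ^ (s + 2) * d ^ (t + 1)) = π ((b ^ s * d ^ t) * (b ^ 2 * d)) := by ring_nf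
    _ = π (b ^ s * d ^ t) * π (b ^ 2 * d) := map_mul _ _ _
    _ = π (b ^ s * d ^ t) * π (b * d ^ 2) := by rw [hbd]
    _ = π ((b ^ s * d ^ t) * (b * d ^ 2)) := (map_mul _ _ _).symm
    _ = π (b ^ (s + 1) * d ^ (t + 2)) := by ring_nf

lemma lemA : ∀ s t : ℕ, π (b ^ (s + 1) * d ^ (t + 1)) = π (b * d ^ (s + t + 1)) := by
  intro s
  induction s with
  | zero => intro t; simp
  | succ s ih =>
    intro t
    rw [step s t, ih (t + 1), show s + (t + 1) + 1 = s + 1 + t + 1 from by omega]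

lemma lemB (t : ℕ) : π a * π (b * d ^ (t + 2)) = π c * π (b * d ^ (t + 2)) := by
  calc π a * π (b * d ^ (t + 2)) = π (a * (b * d ^ (t + 2))) := (map_mul _ _ _).symm
    _ = π ((a * d) * (b * d ^ (t + 1))) := by ring_nf
    _ = π (a * d) * π (b * d ^ (t + 1)) := map_mul _ _ _
    _ = π (c * b) * π (b * d ^ (t + 1)) := by rw [had]
    _ = π ((c * b) * (b * d ^ (t + 1))) := (map_mul _ _ _).symm
    _ = π (c * (b ^ (1 + 1) * d ^ (t + 1))) := by ring_nf
    _ = π c * π (b ^ (1 + 1) * d ^ (t + 1)) := map_mul _ _ _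
    _ = π c * π (b * d ^ (1 + t + 1)) := by rw [lemA 1 t]
    _ = π c * π (b * d ^ (t + 2)) := by rw [show 1 + t + 1 = t + 2 from by omega]

lemma lemC (m t : ℕ) : π a ^ m * π (b * d ^ (t + 2)) = π c ^ m * π (b * d ^ (t + 2)) := by
  induction m with
  | zero => simp
  | succ m ih =>
    calc π a ^ (m + 1) * π (b * d ^ (t + 2))
        = π a ^ m * (π a * π (b * d ^ (t + 2))) := by ring
      _ = π a ^ m * (π c * π (b * d ^ (t + 2))) := by rw [lemB]
      _ = π c * (π a ^ m * π (b * d ^ (t + 2))) := by ring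
      _ = π c * (π c ^ m * π (b * d ^ (t + 2))) := by rw [ih]
      _ = π c ^ (m + 1) * π (b * d ^ (t + 2)) := by ring

theorem stmt_9 (k i m n : ℕ) (hk : 3 ≤ k) (hi1 : 1 ≤ i) (hik : i ≤ k - 1) :
    π (a ^ m * c ^ n * b ^ i * d ^ (k - i)) = π (c ^ (m + n) * b * d ^ (k - 1)) := by
  obtain ⟨i', rfl⟩ : ∃ i', i = i' + 1 := ⟨i - 1, by omega⟩
  obtain ⟨t, ht⟩ : ∃ t, k - 1 = t + 2 := ⟨k - 3, by omega⟩
  obtain ⟨j', hj⟩ : ∃ j', k - (i' + 1) = j' + 1 := ⟨k - i' - 2, by omega⟩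
  have hsum : i' + j' + 1 = t + 2 := by omega
  calc π (a ^ m * c ^ n * b ^ (i' + 1) * d ^ (k - (i' + 1)))
      = π ((a ^ m * c ^ n) * (b ^ (i' + 1) * d ^ (j' + 1))) := by rw [hj]; ring_nf
    _ = π (a ^ m * c ^ n) * π (b ^ (i' + 1) * d ^ (j' + 1)) := map_mul _ _ _
    _ = π (a ^ m * c ^ n) * π (b * d ^ (t + 2)) := by rw [lemA, hsum]
    _ = π a ^ m * π c ^ n * π (b * d ^ (t + 2)) := by rw [map_mul, map_pow, map_pow]
    _ = π c ^ n * (π a ^ m * π (b * d ^ (t + 2))) := by ring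
    _ = π c ^ n * (π c ^ m * π (b * d ^ (t + 2))) := by rw [lemC]
    _ = π c ^ (m + n) * π (b * d ^ (t + 2)) := by ring
    _ = π (c ^ (m + n) * (b * d ^ (t + 2))) := by simp [map_mul, map_pow]
    _ = π (c ^ (m + n) * b * d ^ (k - 1)) := by rw [ht]; ring_nf
end

section
/- With the weight grading wt(a)=0, wt(b)=1, wt(c)=0, wt(d)=1 on S, and N_k := π(weightedHomogeneousSubmodule of weight k): N₀ is the ℤ/2-span of the images π(a^m·c^n) (m,n ≥ 0); N₁ is the ℤ/2-span of the images π(a^m·b) and π(a^m·c^n·d) (m,n ≥ 0); N₂ is the ℤ/2-span of the images π(a^m·b²), π(a^m·c^n·b·d), and π(c^n·d²) (m,n ≥ 0); and in each case the listed family of images is ℤ/2-linearly independent in N (so it is a basis of N_k). -/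
open MvPolynomial

/-- The weights `wt(a) = 0`, `wt(b) = 1`, `wt(c) = 0`, `wt(d) = 1`. -/
def wt : Fin 4 → ℕ := ![0, 1, 0, 1]

/-- `N_k`: the image under `π` of the weighted-homogeneous polynomials of weight `k`. -/
noncomputable def Nwt (k : ℕ) : Submodule (ZMod 2) N :=
  Submodule.map (Ideal.Quotient.mkₐ (ZMod 2) J).toLinearMap
    (weightedHomogeneousSubmodule (ZMod 2) wt k)

namespace SWaux

lemma add_self {R : Type*} [Ring R] [Algebra (ZMod 2) R] (u : R) : u + u = 0 := by
  have h := two_smul (ZMod 2) u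
  have h2 : (2 : ZMod 2) = 0 := rfl
  rw [h2, zero_smul] at h
  exact h.symm

/-! ### Monomial bookkeeping -/

noncomputable def vmk (i j k l : ℕ) : Fin 4 →₀ ℕ :=
  Finsupp.single 0 i + Finsupp.single 1 j + Finsupp.single 2 k + Finsupp.single 3 l

lemma vmk_eq (v : Fin 4 →₀ ℕ) : v = vmk (v 0) (v 1) (v 2) (v 3) := by
  ext i
  fin_cases i <;> simp [vmk, Finsupp.single_apply]

lemma mono_eq (i j k l : ℕ) :
    (monomial (vmk i j k l) (1 : ZMod 2) : S) = a ^ i * b ^ j * c ^ k * d ^ l := by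
  simp [a, b, c, d, X_pow_eq_monomial, monomial_mul, vmk]

lemma weight_eval (v : Fin 4 →₀ ℕ) : Finsupp.weight wt v = v 1 + v 3 := by
  rw [Finsupp.weight_apply, Finsupp.sum_fintype]
  · rw [Fin.sum_univ_four]
    simp [wt]
  · intro i; simp

lemma vmk_app (i j k l : ℕ) :
    vmk i j k l 0 = i ∧ vmk i j k l 1 = j ∧ vmk i j k l 2 = k ∧ vmk i j k l 3 = l := by
  refine ⟨?_, ?_, ?_, ?_⟩ <;> simp [vmk, Finsupp.single_apply]

lemma weight_vmk (i j k l : ℕ) : Finsupp.weight wt (vmk i j k l) = j + l := by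
  rw [weight_eval, (vmk_app i j k l).2.1, (vmk_app i j k l).2.2.2]

lemma pi_smul (g : ZMod 2) (p : S) : π (g • p) = g • π p := by
  show Ideal.Quotient.mk J (g • p) = g • Ideal.Quotient.mk J p
  rw [← Ideal.Quotient.mkₐ_eq_mk (ZMod 2) J]
  exact map_smul _ g p

/-- Spanning helper: membership of `π p` for weighted-homogeneous `p` reduces to monomials. -/
lemma span_helper {k : ℕ} {T : Submodule (ZMod 2) N}
    (hT : ∀ i j kk l : ℕ, j + l = k → π (a ^ i * b ^ j * c ^ kk * d ^ l) ∈ T)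
    {p : S} (hp : p.IsWeightedHomogeneous wt k) : π p ∈ T := by
  have hdecomp : π p = ∑ v ∈ p.support, coeff v p • π (monomial v 1) := by
    conv_lhs => rw [← support_sum_monomial_coeff p]
    rw [map_sum]
    refine Finset.sum_congr rfl fun v hv => ?_
    rw [← pi_smul]
    congr 1
    rw [smul_monomial, smul_eq_mul, mul_one]
  rw [hdecomp]
  refine Submodule.sum_mem _ fun v hv => Submodule.smul_mem _ _ ?_
  have hw : Finsupp.weight wt v = k := hp (mem_support_iff.mp hv)
  rw [weight_eval] at hw
  rw [vmk_eq v, mono_eq]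
  exact hT _ _ _ _ hw

lemma mem_Nwt {k : ℕ} (i j kk l : ℕ) (h : j + l = k) :
    π (a ^ i * b ^ j * c ^ kk * d ^ l) ∈ Nwt k := by
  refine ⟨monomial (vmk i j kk l) 1, ?_, ?_⟩
  · simp only [SetLike.mem_coe, mem_weightedHomogeneousSubmodule]
    exact isWeightedHomogeneous_monomial _ _ _ (by rw [weight_vmk]; exact h)
  · simp only [AlgHom.toLinearMap_apply, Ideal.Quotient.mkₐ_eq_mk, mono_eq]
    rfl

/-- The basic rewriting rule `π(p·c·b) = π(p·a·d)` coming from the first relation. -/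
lemma rw1 (p : S) : π (p * (c * b)) = π (p * (a * d)) := by
  have hmem : p * (a * d + c * b) ∈ J :=
    Ideal.mul_mem_left _ p (Ideal.subset_span (Or.inl rfl))
  have h : π (p * (a * d)) + π (p * (c * b)) = 0 := by
    rw [← map_add, ← mul_add]
    exact Ideal.Quotient.eq_zero_iff_mem.mpr hmem
  have h2 := add_self (π (p * (a * d)))
  exact add_left_cancel (h.trans h2.symm)

/-! ### The detecting homomorphism -/

noncomputable abbrev A : Type := MvPolynomial (Fin 2) (ZMod 2)
noncomputable def x : A := X 0
noncomputable def s : A := X 1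

/-- `a ↦ x`, `b ↦ x·t`, `c ↦ x+s`, `d ↦ (x+s)·t` into `A[t]`. -/
noncomputable def φ0 : S →ₐ[ZMod 2] Polynomial A :=
  MvPolynomial.aeval ![Polynomial.C x, Polynomial.C x * Polynomial.X,
    Polynomial.C (x + s), Polynomial.C (x + s) * Polynomial.X]

lemma φ0_a : φ0 a = Polynomial.C x := by simp [φ0, a]
lemma φ0_b : φ0 b = Polynomial.C x * Polynomial.X := by simp [φ0, b]
lemma φ0_c : φ0 c = Polynomial.C (x + s) := by simp [φ0, c]
lemma φ0_d : φ0 d = Polynomial.C (x + s) * Polynomial.X := by simp [φ0, d]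

lemma φ0_r1 : φ0 (a * d + c * b) = 0 := by
  simp only [map_add, map_mul, φ0_a, φ0_b, φ0_c, φ0_d]
  have h : ∀ u v : Polynomial A, u * (v * Polynomial.X) + v * (u * Polynomial.X)
      = u * (v * Polynomial.X) + u * (v * Polynomial.X) := by intros; ring
  rw [h, add_self]

lemma φ0_r2 : φ0 (b * d ^ 2 + b ^ 2 * d)
    = Polynomial.C (x * (x + s) ^ 2 + x ^ 2 * (x + s)) * Polynomial.X ^ 3 := by
  simp only [map_add, map_mul, map_pow, φ0_b, φ0_d]
  ring

lemma map_J_le : Ideal.map (φ0 : S →ₐ[ZMod 2] Polynomial A).toRingHom J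
    ≤ Ideal.span {(Polynomial.X : Polynomial A) ^ 3} := by
  rw [J, Ideal.map_span, Ideal.span_le]
  rintro _ ⟨q, (rfl | rfl), rfl⟩ <;>
      simp only [AlgHom.toRingHom_eq_coe, RingHom.coe_coe, SetLike.mem_coe]
  · rw [φ0_r1]
    exact Ideal.zero_mem _
  · rw [φ0_r2]
    exact Ideal.mem_span_singleton'.mpr ⟨_, rfl⟩

/-- Key helper: independence in `N` of images of monomials detected by `φ0` in `t`-degree `e < 3`. -/
lemma indep_helper {ι : Type*} (mono : ι → S) (e : ℕ) (he : e < 3) (Q : ι → A)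
    (hQ : ∀ i, φ0 (mono i) = Polynomial.C (Q i) * Polynomial.X ^ e)
    (hQind : LinearIndependent (ZMod 2) Q) :
    LinearIndependent (ZMod 2) fun i => π (mono i) := by
  rw [linearIndependent_iff'] at hQind ⊢
  intro t g hsum i hit
  refine hQind t g ?_ i hit
  have hmem : (∑ i ∈ t, g i • mono i) ∈ J := by
    rw [← Ideal.Quotient.eq_zero_iff_mem]
    have h : Ideal.Quotient.mk J (∑ i ∈ t, g i • mono i)
        = ∑ i ∈ t, g i • π (mono i) := by
      rw [← Ideal.Quotient.mkₐ_eq_mk (ZMod 2) J, map_sum]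
      refine Finset.sum_congr rfl fun i _ => ?_
      rw [map_smul]; rfl
    rw [h, hsum]
  have hmap : φ0 (∑ i ∈ t, g i • mono i) ∈
      Ideal.span {(Polynomial.X : Polynomial A) ^ 3} :=
    map_J_le (Ideal.mem_map_of_mem _ hmem)
  obtain ⟨q, hq⟩ := Ideal.mem_span_singleton'.mp hmap
  have hco := congrArg (fun p => Polynomial.coeff p e) hq
  rw [Polynomial.coeff_mul_X_pow', if_neg (by omega)] at hco
  rw [map_sum] at hco
  have h2 : ∀ i ∈ t, Polynomial.coeff (φ0 (g i • mono i)) e = g i • Q i := by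
    intro i _
    rw [map_smul, Polynomial.coeff_smul, hQ i, Polynomial.coeff_C_mul,
      Polynomial.coeff_X_pow, if_pos rfl, mul_one]
  rw [Polynomial.finset_sum_coeff, Finset.sum_congr rfl h2] at hco
  exact hco.symm

/-! ### Independence of the base family in `A` -/

noncomputable def F : ℕ × ℕ → A := fun p => x ^ p.1 * (x + s) ^ p.2

lemma F_indep : LinearIndependent (ZMod 2) F := by
  let ψ : A →ₐ[ZMod 2] A := MvPolynomial.aeval ![x, x + s]
  have hG : LinearIndependent (ZMod 2) fun p : ℕ × ℕ =>
      (monomial (Finsupp.single 0 p.1 + Finsupp.single 1 p.2) (1 : ZMod 2) : A) := by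
    have hinj : Function.Injective
        (fun p : ℕ × ℕ => Finsupp.single 0 p.1 + Finsupp.single 1 p.2 : ℕ × ℕ → Fin 2 →₀ ℕ) := by
      intro p q h
      have h0 := congrArg (fun f : Fin 2 →₀ ℕ => f 0) h
      have h1 := congrArg (fun f : Fin 2 →₀ ℕ => f 1) h
      simp [Finsupp.single_apply] at h0 h1
      exact Prod.ext h0 h1
    have h := (basisMonomials (Fin 2) (ZMod 2)).linearIndependent.comp
      (fun p : ℕ × ℕ => Finsupp.single 0 p.1 + Finsupp.single 1 p.2) hinj
    have heq : (⇑(basisMonomials (Fin 2) (ZMod 2)) ∘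
        fun p : ℕ × ℕ => Finsupp.single 0 p.1 + Finsupp.single 1 p.2)
        = fun p : ℕ × ℕ =>
        (monomial (Finsupp.single 0 p.1 + Finsupp.single 1 p.2) (1 : ZMod 2) : A) := by
      funext p
      simp [coe_basisMonomials]
    rwa [heq] at h
  refine LinearIndependent.of_comp ψ.toLinearMap ?_
  have h : (ψ.toLinearMap ∘ F) = fun p : ℕ × ℕ =>
      (monomial (Finsupp.single 0 p.1 + Finsupp.single 1 p.2) (1 : ZMod 2) : A) := by
    funext p
    have hx : ψ x = x := by simp [ψ, x]
    have hxs : ψ (x + s) = s := by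
      have hs : ψ s = x + s := by simp [ψ, s]
      rw [map_add, hx, hs, show x + (x + s) = s + (x + x) by ring, add_self, add_zero]
    simp only [AlgHom.toLinearMap_apply, Function.comp_apply, F, map_mul, map_pow, hx, hxs]
    simp [x, s, X_pow_eq_monomial, monomial_mul]
  rw [h]
  exact hG

/-! ### The three independence statements -/

lemma indep0 : LinearIndependent (ZMod 2) (fun p : ℕ × ℕ => π (a ^ p.1 * c ^ p.2)) := by
  refine indep_helper _ 0 (by omega) F ?_ F_indep
  intro p
  simp only [F, map_mul, map_pow, map_add, φ0_a, φ0_c, pow_zero, mul_one]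

lemma indep1 : LinearIndependent (ZMod 2) (Sum.elim (fun m : ℕ => π (a ^ m * b))
    (fun p : ℕ × ℕ => π (a ^ p.1 * c ^ p.2 * d))) := by
  have hρ : Function.Injective
      (Sum.elim (fun k : ℕ => (k + 1, 0)) (fun p : ℕ × ℕ => (p.1, p.2 + 1)) :
        ℕ ⊕ ℕ × ℕ → ℕ × ℕ) := by
    rintro (i | p) (j | q) h <;>
      simp only [Sum.elim_inl, Sum.elim_inr, Prod.mk.injEq] at h
    · exact congrArg Sum.inl (by omega)
    · exact absurd h.2 (by omega)
    · exact absurd h.2 (by omega)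
    · exact congrArg Sum.inr (Prod.ext (by omega) (by omega))
  have key : LinearIndependent (ZMod 2) fun i : ℕ ⊕ ℕ × ℕ =>
      π (Sum.elim (fun m : ℕ => a ^ m * b) (fun p : ℕ × ℕ => a ^ p.1 * c ^ p.2 * d) i) := by
    refine indep_helper _ 1 (by omega)
      (F ∘ Sum.elim (fun k : ℕ => (k + 1, 0)) (fun p : ℕ × ℕ => (p.1, p.2 + 1))) ?_
      (F_indep.comp _ hρ)
    rintro (k | p) <;>
      simp only [Sum.elim_inl, Sum.elim_inr, Function.comp_apply, F, map_mul, map_pow,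
        map_add, φ0_a, φ0_b, φ0_c, φ0_d] <;> ring
  have he : (Sum.elim (fun m : ℕ => π (a ^ m * b))
      (fun p : ℕ × ℕ => π (a ^ p.1 * c ^ p.2 * d))) = fun i : ℕ ⊕ ℕ × ℕ =>
      π (Sum.elim (fun m : ℕ => a ^ m * b) (fun p : ℕ × ℕ => a ^ p.1 * c ^ p.2 * d) i) := by
    funext i; cases i <;> rfl
  rw [he]
  exact key

lemma indep2 : LinearIndependent (ZMod 2) (Sum.elim (fun m : ℕ => π (a ^ m * b ^ 2))
    (Sum.elim (fun p : ℕ × ℕ => π (a ^ p.1 * c ^ p.2 * b * d))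
      (fun n : ℕ => π (c ^ n * d ^ 2)))) := by
  have hρ : Function.Injective
      (Sum.elim (fun k : ℕ => (k + 2, 0))
        (Sum.elim (fun p : ℕ × ℕ => (p.1 + 1, p.2 + 1)) (fun n : ℕ => (0, n + 2))) :
        ℕ ⊕ (ℕ × ℕ ⊕ ℕ) → ℕ × ℕ) := by
    rintro (i | p | n) (j | q | m) h <;>
      simp only [Sum.elim_inl, Sum.elim_inr, Prod.mk.injEq] at h
    · exact congrArg Sum.inl (by omega)
    · exact absurd h.2 (by omega)
    · exact absurd h.1 (by omega)
    · exact absurd h.2 (by omega)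
    · exact congrArg Sum.inr (congrArg Sum.inl (Prod.ext (by omega) (by omega)))
    · exact absurd h.1 (by omega)
    · exact absurd h.1 (by omega)
    · exact absurd h.1 (by omega)
    · exact congrArg Sum.inr (congrArg Sum.inr (by omega))
  have key : LinearIndependent (ZMod 2) fun i : ℕ ⊕ (ℕ × ℕ ⊕ ℕ) =>
      π (Sum.elim (fun m : ℕ => a ^ m * b ^ 2)
        (Sum.elim (fun p : ℕ × ℕ => a ^ p.1 * c ^ p.2 * b * d)
          (fun n : ℕ => c ^ n * d ^ 2)) i) := by
    refine indep_helper _ 2 (by omega)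
      (F ∘ Sum.elim (fun k : ℕ => (k + 2, 0))
        (Sum.elim (fun p : ℕ × ℕ => (p.1 + 1, p.2 + 1)) (fun n : ℕ => (0, n + 2)))) ?_
      (F_indep.comp _ hρ)
    rintro (k | p | n) <;>
      simp only [Sum.elim_inl, Sum.elim_inr, Function.comp_apply, F, map_mul, map_pow,
        map_add, φ0_a, φ0_b, φ0_c, φ0_d] <;> ring
  have he : (Sum.elim (fun m : ℕ => π (a ^ m * b ^ 2))
      (Sum.elim (fun p : ℕ × ℕ => π (a ^ p.1 * c ^ p.2 * b * d))
        (fun n : ℕ => π (c ^ n * d ^ 2)))) = fun i : ℕ ⊕ (ℕ × ℕ ⊕ ℕ) =>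
      π (Sum.elim (fun m : ℕ => a ^ m * b ^ 2)
        (Sum.elim (fun p : ℕ × ℕ => a ^ p.1 * c ^ p.2 * b * d)
          (fun n : ℕ => c ^ n * d ^ 2)) i) := by
    funext i; rcases i with i | i | i <;> rfl
  rw [he]
  exact key

/-! ### The three spanning statements -/

lemma forward_aux {k : ℕ} {T : Submodule (ZMod 2) N}
    (hT : ∀ i j kk l : ℕ, j + l = k → π (a ^ i * b ^ j * c ^ kk * d ^ l) ∈ T) :
    Nwt k ≤ T := by
  rintro _ ⟨p, hp, rfl⟩
  simp only [AlgHom.toLinearMap_apply, Ideal.Quotient.mkₐ_eq_mk]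
  show π p ∈ T
  exact span_helper hT ((mem_weightedHomogeneousSubmodule _ _ _ _).mp hp)

lemma span0 : Nwt 0 = Submodule.span (ZMod 2)
    (Set.range fun p : ℕ × ℕ => π (a ^ p.1 * c ^ p.2)) := by
  apply le_antisymm
  · refine forward_aux fun i j kk l h => ?_
    obtain ⟨rfl, rfl⟩ : j = 0 ∧ l = 0 := by omega
    exact Submodule.subset_span ⟨(i, kk), congrArg π (by ring)⟩
  · rw [Submodule.span_le]
    rintro _ ⟨⟨m, n⟩, rfl⟩
    show π (a ^ m * c ^ n) ∈ Nwt 0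
    rw [show a ^ m * c ^ n = a ^ m * b ^ 0 * c ^ n * d ^ 0 by ring]
    exact mem_Nwt m 0 n 0 rfl

lemma span1 : Nwt 1 = Submodule.span (ZMod 2)
    (Set.range (Sum.elim (fun m : ℕ => π (a ^ m * b))
      (fun p : ℕ × ℕ => π (a ^ p.1 * c ^ p.2 * d)))) := by
  apply le_antisymm
  · refine forward_aux fun i j kk l h => ?_
    have hcase : (j = 1 ∧ l = 0) ∨ (j = 0 ∧ l = 1) := by omega
    rcases hcase with ⟨rfl, rfl⟩ | ⟨rfl, rfl⟩
    · rcases kk with _ | k'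
      · exact Submodule.subset_span ⟨Sum.inl i, congrArg π (by ring)⟩
      · rw [show π (a ^ i * b ^ 1 * c ^ (k' + 1) * d ^ 0)
            = π ((a ^ i * c ^ k') * (c * b)) from congrArg π (by ring), rw1]
        exact Submodule.subset_span ⟨Sum.inr (i + 1, k'), congrArg π (by ring)⟩
    · exact Submodule.subset_span ⟨Sum.inr (i, kk), congrArg π (by ring)⟩
  · rw [Submodule.span_le]
    rintro _ ⟨(m | ⟨m, n⟩), rfl⟩
    · show π (a ^ m * b) ∈ Nwt 1
      rw [show a ^ m * b = a ^ m * b ^ 1 * c ^ 0 * d ^ 0 by ring]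
      exact mem_Nwt m 1 0 0 rfl
    · show π (a ^ m * c ^ n * d) ∈ Nwt 1
      rw [show a ^ m * c ^ n * d = a ^ m * b ^ 0 * c ^ n * d ^ 1 by ring]
      exact mem_Nwt m 0 n 1 rfl

lemma span2 : Nwt 2 = Submodule.span (ZMod 2)
    (Set.range (Sum.elim (fun m : ℕ => π (a ^ m * b ^ 2))
      (Sum.elim (fun p : ℕ × ℕ => π (a ^ p.1 * c ^ p.2 * b * d))
        (fun n : ℕ => π (c ^ n * d ^ 2))))) := by
  apply le_antisymm
  · refine forward_aux fun i j kk l h => ?_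
    have hcase : (j = 2 ∧ l = 0) ∨ (j = 1 ∧ l = 1) ∨ (j = 0 ∧ l = 2) := by omega
    rcases hcase with ⟨rfl, rfl⟩ | ⟨rfl, rfl⟩ | ⟨rfl, rfl⟩
    · rcases kk with _ | k'
      · exact Submodule.subset_span ⟨Sum.inl i, congrArg π (by ring)⟩
      · rw [show π (a ^ i * b ^ 2 * c ^ (k' + 1) * d ^ 0)
            = π ((a ^ i * b * c ^ k') * (c * b)) from congrArg π (by ring), rw1]
        exact Submodule.subset_span ⟨Sum.inr (Sum.inl (i + 1, k')), congrArg π (by ring)⟩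
    · exact Submodule.subset_span ⟨Sum.inr (Sum.inl (i, kk)), congrArg π (by ring)⟩
    · rcases i with _ | i'
      · exact Submodule.subset_span ⟨Sum.inr (Sum.inr kk), congrArg π (by ring)⟩
      · rw [show π (a ^ (i' + 1) * b ^ 0 * c ^ kk * d ^ 2)
            = π ((a ^ i' * c ^ kk * d) * (a * d)) from congrArg π (by ring), ← rw1]
        exact Submodule.subset_span ⟨Sum.inr (Sum.inl (i', kk + 1)), congrArg π (by ring)⟩
  · rw [Submodule.span_le]
    rintro _ ⟨(m | ⟨m, n⟩ | n), rfl⟩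
    · show π (a ^ m * b ^ 2) ∈ Nwt 2
      rw [show a ^ m * b ^ 2 = a ^ m * b ^ 2 * c ^ 0 * d ^ 0 by ring]
      exact mem_Nwt m 2 0 0 rfl
    · show π (a ^ m * c ^ n * b * d) ∈ Nwt 2
      rw [show a ^ m * c ^ n * b * d = a ^ m * b ^ 1 * c ^ n * d ^ 1 by ring]
      exact mem_Nwt m 1 n 1 rfl
    · show π (c ^ n * d ^ 2) ∈ Nwt 2
      rw [show c ^ n * d ^ 2 = a ^ 0 * b ^ 0 * c ^ n * d ^ 2 by ring]
      exact mem_Nwt 0 0 n 2 rfl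

end SWaux

theorem stmt_10 :
    (Nwt 0 = Submodule.span (ZMod 2)
        (Set.range fun p : ℕ × ℕ => π (a ^ p.1 * c ^ p.2))) ∧
    (Nwt 1 = Submodule.span (ZMod 2)
        (Set.range (Sum.elim (fun m : ℕ => π (a ^ m * b))
          (fun p : ℕ × ℕ => π (a ^ p.1 * c ^ p.2 * d))))) ∧
    (Nwt 2 = Submodule.span (ZMod 2)
        (Set.range (Sum.elim (fun m : ℕ => π (a ^ m * b ^ 2))
          (Sum.elim (fun p : ℕ × ℕ => π (a ^ p.1 * c ^ p.2 * b * d))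
            (fun n : ℕ => π (c ^ n * d ^ 2)))))) ∧
    LinearIndependent (ZMod 2) (fun p : ℕ × ℕ => π (a ^ p.1 * c ^ p.2)) ∧
    LinearIndependent (ZMod 2) (Sum.elim (fun m : ℕ => π (a ^ m * b))
      (fun p : ℕ × ℕ => π (a ^ p.1 * c ^ p.2 * d))) ∧
    LinearIndependent (ZMod 2) (Sum.elim (fun m : ℕ => π (a ^ m * b ^ 2))
      (Sum.elim (fun p : ℕ × ℕ => π (a ^ p.1 * c ^ p.2 * b * d))
        (fun n : ℕ => π (c ^ n * d ^ 2)))) :=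
  ⟨SWaux.span0, SWaux.span1, SWaux.span2, SWaux.indep0, SWaux.indep1, SWaux.indep2⟩
end

section
/- The element b⁴·c²·(a² + c²) of S lies in the ideal J; that is, π(b⁴·c²·a² + b⁴·c⁴) = 0 in N. -/
open MvPolynomial

theorem stmt_12 : b ^ 4 * c ^ 2 * (a ^ 2 + c ^ 2) ∈ J := by
  have h2 : (2 : S) = 0 := by
    exact_mod_cast CharP.cast_eq_zero S 2
  rw [J, Ideal.mem_span_pair]
  refine ⟨b^3*c^3 + a*b^2*c^2*d + a^2*b^2*c*d + a^2*b^3*c,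
          a^2*b*c^2 + a^3*b*c, ?_⟩
  linear_combination (a*b^3*c^3*d + a^2*b^2*c^2*d^2 + a^3*b^2*c*d^2 + a^2*b^3*c^2*d + a^3*b^3*c*d) * h2
end

section
/- The element a·b·d⁴ + c·d·b⁴ of S lies in the ideal J. (This is the computation showing that the differential d₁₇ of the Leray–Serre spectral sequence vanishes on u₁¹⁶: Sq⁸(w₃'w₃''² + w₃'²w₃'') = w₂'w₃'w₃''⁴ + w₂''w₃''w₃'⁴ ≡ 0 modulo the earlier relations.) -/
open MvPolynomial

theorem stmt_16 : a * b * d ^ 4 + c * d * b ^ 4 ∈ J := by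
  have h2 : (2 : S) = 0 := by
    have := CharP.cast_eq_zero S 2
    exact_mod_cast this
  have key : a * b * d ^ 4 + c * d * b ^ 4 + 2 * (c * b ^ 2 * d ^ 3 + c * b ^ 3 * d ^ 2)
      = (b * d ^ 3) * (a * d + c * b) + (c * b * (d + b)) * (b * d ^ 2 + b ^ 2 * d) := by
    ring
  rw [h2, zero_mul, add_zero] at key
  rw [key]
  exact Ideal.add_mem _
    (Ideal.mul_mem_left _ _ (Ideal.subset_span (Set.mem_insert _ _)))
    (Ideal.mul_mem_left _ _ (Ideal.subset_span (Set.mem_insert_of_mem _ rfl)))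
end
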